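/- Let f, g : ℝ^p × ℝ^q → ℝ be twice continuously differentiable, let α ∈ ℝ, D ∈ ℕ with D ≥ 1, and fix y⁰ ∈ ℝ^q. Define maps y^t : ℝ^p → ℝ^q recursively by y^0(x) = y⁰ and y^t(x) = y^{t−1}(x) − α ∇_y g(x, y^{t−1}(x)) for t = 1, …, D. Then the function x ↦ f(x, y^D(x)) is differentiable on ℝ^p, and its gradient equals ∇_x f(x, y^D(x)) − α Σ_{t=0}^{D−1} ∇_x∇_y g(x, y^t(x)) [ ∏_{j=t+1}^{D−1} ( I − α ∇²_y g(x, y^j(x)) ) ] ∇_y f(x, y^D(x)), where the matrix product is ordered with increasing j from left to right and the empty product (t = D−1) is the identity. -/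

import Mathlib

open scoped RealInnerProductSpace

noncomputable section

abbrev Euc (n : ℕ) : Type := EuclideanSpace ℝ (Fin n)

variable {p q : ℕ}

/-- The partial gradient `∇ₓ f(x,y)`. -/
noncomputable def gradX (f : Euc p × Euc q → ℝ) (x : Euc p) (y : Euc q) : Euc p :=
  gradient (fun x' => f (x', y)) x

/-- The partial gradient `∇_y f(x,y)`. -/
noncomputable def gradY (f : Euc p × Euc q → ℝ) (x : Euc p) (y : Euc q) : Euc q :=
  gradient (fun y' => f (x, y')) y

/-- The Hessian `∇²_y g(x,y)` of `y ↦ g(x,y)`, as a continuous linear map. -/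
noncomputable def hessY (g : Euc p × Euc q → ℝ) (x : Euc p) (y : Euc q) :
    Euc q →L[ℝ] Euc q :=
  fderiv ℝ (fun y' => gradY g x y') y

/-- The Fréchet derivative in `x` of `x ↦ ∇_y g(x,y)`; the paper's mixed second
derivative matrix `∇ₓ∇_y g(x,y)` is its adjoint. -/
noncomputable def mixXY (g : Euc p × Euc q → ℝ) (x : Euc p) (y : Euc q) :
    Euc p →L[ℝ] Euc q :=
  fderiv ℝ (fun x' => gradY g x' y) x

open ContinuousLinearMap InnerProductSpace

/-- The total map `z ↦ ∇_y g z` -/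
noncomputable def GY (g : Euc p × Euc q → ℝ) : Euc p × Euc q → Euc q :=
  fun z => (toDual ℝ (Euc q)).symm ((fderiv ℝ g z).comp (ContinuousLinearMap.inr ℝ (Euc p) (Euc q)))

lemma gradY_eq_GY {g : Euc p × Euc q → ℝ} (hg : Differentiable ℝ g) (x : Euc p) (y : Euc q) :
    gradY g x y = GY g (x, y) := by
  have h1 : HasFDerivAt (fun y' : Euc q => g (x, y'))
      ((fderiv ℝ g (x, y)).comp (ContinuousLinearMap.inr ℝ (Euc p) (Euc q))) y :=
    (hg (x, y)).hasFDerivAt.comp y (hasFDerivAt_prodMk_right x y)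
  show (toDual ℝ (Euc q)).symm (fderiv ℝ (fun y' => g (x, y')) y) = _
  rw [h1.fderiv]
  rfl

lemma contDiff_GY {g : Euc p × Euc q → ℝ} (hg : ContDiff ℝ 2 g) : ContDiff ℝ 1 (GY g) := by
  have h1 : ContDiff ℝ 1 (fderiv ℝ g) := hg.fderiv_right (by norm_num)
  have h2 : ContDiff ℝ 1 (fun z => (fderiv ℝ g z).comp (ContinuousLinearMap.inr ℝ (Euc p) (Euc q))) :=
    (((ContinuousLinearMap.compL ℝ (Euc q) (Euc p × Euc q) ℝ).flip
        (ContinuousLinearMap.inr ℝ (Euc p) (Euc q))).contDiff).comp h1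
  exact ((toDual ℝ (Euc q)).symm.contDiff).comp h2

lemma mixXY_eq {g : Euc p × Euc q → ℝ} (hg : ContDiff ℝ 2 g) (x : Euc p) (y : Euc q) :
    mixXY g x y = (fderiv ℝ (GY g) (x, y)).comp (ContinuousLinearMap.inl ℝ (Euc p) (Euc q)) := by
  have hdg : Differentiable ℝ g := hg.differentiable (by norm_num)
  have h1 : HasFDerivAt (fun x' : Euc p => GY g (x', y))
      ((fderiv ℝ (GY g) (x, y)).comp (ContinuousLinearMap.inl ℝ (Euc p) (Euc q))) x :=
    (((contDiff_GY hg).differentiable one_ne_zero) (x, y)).hasFDerivAt.comp x (f := fun x' => (x', y))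
      (hasFDerivAt_prodMk_left x y)
  have h2 : (fun x' : Euc p => gradY g x' y) = fun x' => GY g (x', y) :=
    funext fun x' => gradY_eq_GY hdg x' y
  rw [mixXY, h2, h1.fderiv]

lemma hessY_eq {g : Euc p × Euc q → ℝ} (hg : ContDiff ℝ 2 g) (x : Euc p) (y : Euc q) :
    hessY g x y = (fderiv ℝ (GY g) (x, y)).comp (ContinuousLinearMap.inr ℝ (Euc p) (Euc q)) := by
  have hdg : Differentiable ℝ g := hg.differentiable (by norm_num)
  have h1 : HasFDerivAt (fun y' : Euc q => GY g (x, y'))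
      ((fderiv ℝ (GY g) (x, y)).comp (ContinuousLinearMap.inr ℝ (Euc p) (Euc q))) y :=
    (((contDiff_GY hg).differentiable one_ne_zero) (x, y)).hasFDerivAt.comp y
      (hasFDerivAt_prodMk_right x y)
  have h2 : (fun y' : Euc q => gradY g x y') = fun y' => GY g (x, y') :=
    funext fun y' => gradY_eq_GY hdg x y'
  rw [hessY, h2, h1.fderiv]

lemma comp_prod_decomp {W : Type*} [NormedAddCommGroup W] [NormedSpace ℝ W]
    (DG : Euc p × Euc q →L[ℝ] W) (Φ : Euc p →L[ℝ] Euc q) :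
    DG.comp ((ContinuousLinearMap.id ℝ (Euc p)).prod Φ) =
      DG.comp (ContinuousLinearMap.inl ℝ (Euc p) (Euc q)) +
        (DG.comp (ContinuousLinearMap.inr ℝ (Euc p) (Euc q))).comp Φ := by
  ext v
  simp only [ContinuousLinearMap.comp_apply, ContinuousLinearMap.prod_apply,
    ContinuousLinearMap.coe_id', id_eq, ContinuousLinearMap.add_apply,
    ContinuousLinearMap.inl_apply, ContinuousLinearMap.inr_apply]
  rw [← map_add]
  congr 1
  simp [Prod.ext_iff]

lemma hessY_selfAdjoint {g : Euc p × Euc q → ℝ} (hg : ContDiff ℝ 2 g) (x : Euc p) (y : Euc q) :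
    IsSelfAdjoint (hessY g x y) := by
  rw [ContinuousLinearMap.isSelfAdjoint_iff_isSymmetric]
  intro u v
  have hgx : ContDiff ℝ 2 (fun y' : Euc q => g (x, y')) :=
    hg.comp (contDiff_const.prodMk contDiff_id)
  have hkey : ∀ w : Euc q, hessY g x y w =
      (toDual ℝ (Euc q)).symm (fderiv ℝ (fderiv ℝ (fun y' : Euc q => g (x, y'))) y w) := by
    intro w
    have h2 : (fun y' : Euc q => gradY g x y') =
        (toDual ℝ (Euc q)).symm ∘ (fderiv ℝ (fun y' : Euc q => g (x, y'))) := rfl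
    rw [hessY, h2, LinearIsometryEquiv.comp_fderiv]
    rfl
  have hsymm := (hgx.contDiffAt (x := y)).isSymmSndFDerivAt (by simp)
  simp only [ContinuousLinearMap.coe_coe]
  rw [hkey u, hkey v]
  rw [toDual_symm_apply, real_inner_comm, toDual_symm_apply]
  exact hsymm.eq u v

/-- The recursive derivative of the iterates. -/
noncomputable def itdD (g : Euc p × Euc q → ℝ) (α : ℝ) (ypath : ℕ → Euc p → Euc q)
    (x : Euc p) : ℕ → (Euc p →L[ℝ] Euc q)
  | 0 => 0
  | t + 1 => ((1 : Euc q →L[ℝ] Euc q) - α • hessY g x (ypath t x)).comp (itdD g α ypath x t)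
      - α • mixXY g x (ypath t x)

lemma itd_hasFDerivAt {g : Euc p × Euc q → ℝ} (hg : ContDiff ℝ 2 g) (α : ℝ) (D : ℕ)
    (y0 : Euc q) (ypath : ℕ → Euc p → Euc q) (h0 : ∀ x, ypath 0 x = y0)
    (hrec : ∀ t, t < D → ∀ x, ypath (t + 1) x = ypath t x - α • gradY g x (ypath t x)) :
    ∀ t, t ≤ D → ∀ x, HasFDerivAt (ypath t) (itdD g α ypath x t) x := by
  have hdg : Differentiable ℝ g := hg.differentiable (by norm_num)
  intro t
  induction t with
  | zero =>
    intro _ x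
    have : ypath 0 = fun _ => y0 := funext h0
    rw [this]
    exact hasFDerivAt_const y0 x
  | succ t ih =>
    intro hle x
    have ht := ih (by omega)
    have heq : ypath (t + 1) = fun x' => ypath t x' - α • GY g (x', ypath t x') := by
      funext x'
      rw [hrec t (by omega) x', gradY_eq_GY hdg]
    rw [heq]
    have hGd : HasFDerivAt (GY g) (fderiv ℝ (GY g) (x, ypath t x)) (x, ypath t x) :=
      (((contDiff_GY hg).differentiable one_ne_zero) _).hasFDerivAt
    have hcomp : HasFDerivAt (fun x' => GY g (x', ypath t x'))
        ((fderiv ℝ (GY g) (x, ypath t x)).comp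
          ((ContinuousLinearMap.id ℝ (Euc p)).prod (itdD g α ypath x t))) x :=
      hGd.comp x (f := fun x' => (x', ypath t x')) ((hasFDerivAt_id x).prodMk (ht x))
    have hmain := (ht x).sub (hcomp.const_smul α)
    have hder : itdD g α ypath x t - α • ((fderiv ℝ (GY g) (x, ypath t x)).comp
          ((ContinuousLinearMap.id ℝ (Euc p)).prod (itdD g α ypath x t)))
        = itdD g α ypath x (t + 1) := by
      rw [comp_prod_decomp, ← mixXY_eq hg, ← hessY_eq hg, itdD,
        ContinuousLinearMap.sub_comp, ContinuousLinearMap.smul_comp,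
        ContinuousLinearMap.one_def, ContinuousLinearMap.id_comp, smul_add]
      abel
    rw [← hder]
    exact hmain

set_option maxHeartbeats 1000000 in
lemma adj_formula (α : ℝ) (H : ℕ → Euc q →L[ℝ] Euc q) (M : ℕ → Euc p →L[ℝ] Euc q)
    (hH : ∀ t, IsSelfAdjoint (H t)) (Φ : ℕ → Euc p →L[ℝ] Euc q) (h0 : Φ 0 = 0)
    (hrec : ∀ t, Φ (t + 1) = ((1 : Euc q →L[ℝ] Euc q) - α • H t).comp (Φ t) - α • M t) :
    ∀ T, ContinuousLinearMap.adjoint (Φ T) =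
      (-α) • ∑ t ∈ Finset.range T, (ContinuousLinearMap.adjoint (M t)).comp
        (((List.range (T - 1 - t)).map
          (fun i => (1 : Euc q →L[ℝ] Euc q) - α • H (t + 1 + i))).prod) := by
  intro T
  induction T with
  | zero => simp [h0]
  | succ T ih =>
    have hadj1 : ContinuousLinearMap.adjoint ((1 : Euc q →L[ℝ] Euc q) - α • H T)
        = (1 : Euc q →L[ℝ] Euc q) - α • H T := by
      rw [map_sub, map_smulₛₗ, starRingEnd_apply, star_trivial]
      congr 1
      · rw [ContinuousLinearMap.one_def, ContinuousLinearMap.adjoint_id]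
      · rw [← ContinuousLinearMap.star_eq_adjoint, (hH T).star_eq]
    have hsmul : ContinuousLinearMap.adjoint (α • M T) =
        α • ContinuousLinearMap.adjoint (M T) := by
      rw [map_smulₛₗ]
      simp
    rw [hrec T, map_sub, ContinuousLinearMap.adjoint_comp, hadj1, hsmul, ih]
    rw [Finset.sum_range_succ]
    have hlast : ((List.range (T + 1 - 1 - T)).map
        (fun i => (1 : Euc q →L[ℝ] Euc q) - α • H (T + 1 + i))).prod = 1 := by
      simp
    rw [hlast]
    rw [show (ContinuousLinearMap.adjoint (M T)).comp (1 : Euc q →L[ℝ] Euc q)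
        = ContinuousLinearMap.adjoint (M T) from by
      rw [ContinuousLinearMap.one_def, ContinuousLinearMap.comp_id]]
    rw [ContinuousLinearMap.smul_comp, ContinuousLinearMap.finset_sum_comp]
    have hterm : ∀ t ∈ Finset.range T,
        ((ContinuousLinearMap.adjoint (M t)).comp
          (((List.range (T - 1 - t)).map
            (fun i => (1 : Euc q →L[ℝ] Euc q) - α • H (t + 1 + i))).prod)).comp
          ((1 : Euc q →L[ℝ] Euc q) - α • H T)
        = (ContinuousLinearMap.adjoint (M t)).comp
          (((List.range (T + 1 - 1 - t)).map
            (fun i => (1 : Euc q →L[ℝ] Euc q) - α • H (t + 1 + i))).prod) := by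
      intro t htT
      rw [Finset.mem_range] at htT
      rw [ContinuousLinearMap.comp_assoc]
      congr 1
      have h1 : T + 1 - 1 - t = (T - 1 - t) + 1 := by omega
      have h2 : t + 1 + (T - 1 - t) = T := by omega
      rw [h1, List.range_succ, List.map_append, List.prod_append, List.map_singleton,
        List.prod_singleton, h2, ← ContinuousLinearMap.mul_def]
    rw [Finset.sum_congr rfl hterm, smul_add, sub_eq_add_neg, ← neg_smul]

/-- Proposition 2.2: the ITD gradient form.  If `y^t(x)` are the
inner gradient-descent iterates starting from a fixed `y⁰`, then `x ↦ f(x, y^D(x))` is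
differentiable and its gradient equals
`∇ₓ f(x,y^D(x)) − α Σ_{t<D} ∇ₓ∇_y g(x,y^t(x)) ∏_{j=t+1}^{D-1} (I − α ∇²_y g(x,y^j(x))) ∇_y f(x,y^D(x))`. -/
theorem itd_gradient_form (p q : ℕ) (f g : Euc p × Euc q → ℝ)
    (hf : ContDiff ℝ 2 f) (hg : ContDiff ℝ 2 g)
    (α : ℝ) (D : ℕ) (hD : 1 ≤ D) (y0 : Euc q)
    (ypath : ℕ → Euc p → Euc q)
    (h0 : ∀ x, ypath 0 x = y0)
    (hrec : ∀ t, t < D → ∀ x, ypath (t + 1) x = ypath t x - α • gradY g x (ypath t x)) :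
    Differentiable ℝ (fun x => f (x, ypath D x)) ∧
    ∀ x : Euc p, gradient (fun x' => f (x', ypath D x')) x =
      gradX f x (ypath D x) -
        α • ∑ t ∈ Finset.range D,
          (ContinuousLinearMap.adjoint (mixXY g x (ypath t x)))
            ((((List.range (D - 1 - t)).map (fun i =>
                (1 : Euc q →L[ℝ] Euc q) - α • hessY g x (ypath (t + 1 + i) x))).prod)
              (gradY f x (ypath D x))) := by
  have hdf : Differentiable ℝ f := hf.differentiable (by norm_num)
  have hFD := itd_hasFDerivAt hg α D y0 ypath h0 hrec D le_rfl
  have hcompF : ∀ x, HasFDerivAt (fun x' => f (x', ypath D x'))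
      ((fderiv ℝ f (x, ypath D x)).comp
        ((ContinuousLinearMap.id ℝ (Euc p)).prod (itdD g α ypath x D))) x := fun x =>
    (hdf (x, ypath D x)).hasFDerivAt.comp x ((hasFDerivAt_id x).prodMk (hFD x))
  refine ⟨fun x => (hcompF x).differentiableAt, fun x => ?_⟩
  rw [(hcompF x).hasGradientAt.gradient]
  have hkey : (toDual ℝ (Euc p)).symm ((fderiv ℝ f (x, ypath D x)).comp
        ((ContinuousLinearMap.id ℝ (Euc p)).prod (itdD g α ypath x D)))
      = gradX f x (ypath D x) +
        ContinuousLinearMap.adjoint (itdD g α ypath x D) (gradY f x (ypath D x)) := by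
    apply ext_inner_right ℝ
    intro v
    rw [toDual_symm_apply, inner_add_left]
    have hx1 : (⟪gradX f x (ypath D x), v⟫_ℝ)
        = fderiv ℝ f (x, ypath D x) ((ContinuousLinearMap.inl ℝ (Euc p) (Euc q)) v) := by
      have h1 : HasFDerivAt (fun x' : Euc p => f (x', ypath D x))
          ((fderiv ℝ f (x, ypath D x)).comp (ContinuousLinearMap.inl ℝ (Euc p) (Euc q))) x :=
        (hdf _).hasFDerivAt.comp x (hasFDerivAt_prodMk_left x (ypath D x))
      show (⟪(toDual ℝ (Euc p)).symm (fderiv ℝ (fun x' => f (x', ypath D x)) x), v⟫_ℝ) = _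
      rw [h1.fderiv, toDual_symm_apply]
      rfl
    have hy1 : ∀ w : Euc q, (⟪gradY f x (ypath D x), w⟫_ℝ)
        = fderiv ℝ f (x, ypath D x) ((ContinuousLinearMap.inr ℝ (Euc p) (Euc q)) w) := by
      intro w
      have h1 : HasFDerivAt (fun y' : Euc q => f (x, y'))
          ((fderiv ℝ f (x, ypath D x)).comp (ContinuousLinearMap.inr ℝ (Euc p) (Euc q)))
          (ypath D x) :=
        (hdf _).hasFDerivAt.comp _ (hasFDerivAt_prodMk_right x (ypath D x))
      show (⟪(toDual ℝ (Euc q)).symm (fderiv ℝ (fun y' => f (x, y')) (ypath D x)), w⟫_ℝ) = _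
      rw [h1.fderiv, toDual_symm_apply]
      rfl
    rw [hx1, ContinuousLinearMap.adjoint_inner_left, hy1 (itdD g α ypath x D v),
      comp_prod_decomp]
    simp
  rw [hkey]
  have hadj := adj_formula α (fun t => hessY g x (ypath t x)) (fun t => mixXY g x (ypath t x))
    (fun t => hessY_selfAdjoint hg x (ypath t x)) (fun t => itdD g α ypath x t) rfl
    (fun t => rfl) D
  have happ := congrArg (fun A : Euc q →L[ℝ] Euc p => A (gradY f x (ypath D x))) hadj
  simp only [ContinuousLinearMap.smul_apply, ContinuousLinearMap.sum_apply,
    ContinuousLinearMap.comp_apply] at happ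
  rw [happ, neg_smul, ← sub_eq_add_neg]
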